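/- Let D be a finite dataset in which the first-period choices x₁^k are pairwise distinct across observations. Then D is sophisticated rationalizable if and only if it satisfies Condition 2. -/

import Mathlib

def maxSet {X : Type} (S : Set X) (pref : X → X → Prop) : Set X :=
  {x | x ∈ S ∧ ∀ y ∈ S, pref x y}

def WeakOrder {X : Type} (pref : X → X → Prop) : Prop :=
  (∀ a b, pref a b ∨ pref b a) ∧ Transitive pref

def sec1 {X₁ X₂ : Type} (B : Set (X₁ × X₂)) (a : X₁) : Set (X₁ × X₂) :=
  {y ∈ B | y.1 = a}

def sec2 {X₁ X₂ : Type} (B : Set (X₁ × X₂)) (b : X₂) : Set (X₁ × X₂) :=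
  {y ∈ B | y.2 = b}

def NSARP {K X₁ X₂ : Type} (x : K → X₁ × X₂) (B : K → Set (X₁ × X₂)) : Prop :=
  ¬ ∃ (L : ℕ) (k : Fin (L + 1) → K), ∀ l : Fin (L + 1),
      x (k l) ≠ x (k (l + 1)) ∧ x (k l) ∈ sec1 (B (k (l + 1))) (x (k (l + 1))).1

def NNSARP {K X₁ X₂ : Type} (x : K → X₁ × X₂) (B : K → Set (X₁ × X₂)) : Prop :=
  ¬ ∃ (L : ℕ) (k : Fin (L + 1) → K), ∀ l : Fin (L + 1),
      x (k l) ≠ x (k (l + 1)) ∧ x (k l) ∈ sec2 (B (k (l + 1))) (x (k (l + 1))).2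

def Cond1 {K X₁ X₂ : Type} (x : K → X₁ × X₂) (B : K → Set (X₁ × X₂)) : Prop :=
  ∀ S : Set K, S.Nonempty →
    ¬ (⋃ k ∈ S, sec1 (B k) (x k).1) ⊆ ⋃ k ∈ S, (B k \ sec1 (B k) (x k).1)

def Cond2 {K X₁ X₂ : Type} (x : K → X₁ × X₂) (B : K → Set (X₁ × X₂)) : Prop :=
  ¬ ∃ (L : ℕ) (k : Fin (L + 1) → K), ∀ l : Fin (L + 1),
      x (k l) ≠ x (k (l + 1)) ∧ x (k l) ∈ sec1 (B (k (l + 1))) (x (k l)).1 ∧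
      sec1 (B (k (l + 1))) (x (k l)).1 ⊆ sec1 (B (k l)) (x (k l)).1

def NaiveRat {K X₁ X₂ : Type} (x : K → X₁ × X₂) (B : K → Set (X₁ × X₂)) : Prop :=
  ∃ p1 p2 : X₁ × X₂ → X₁ × X₂ → Prop, WeakOrder p1 ∧ WeakOrder p2 ∧
    ∀ k, (∃ z, maxSet (B k) p1 = {z} ∧ z ∈ sec1 (B k) (x k).1) ∧
      maxSet (sec1 (B k) (x k).1) p2 = {x k}

def NaiveNashRat {K X₁ X₂ : Type} (x : K → X₁ × X₂) (B : K → Set (X₁ × X₂)) : Prop :=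
  ∃ p1 p2 : X₁ × X₂ → X₁ × X₂ → Prop, WeakOrder p1 ∧ WeakOrder p2 ∧
    ∀ k, x k ∈ maxSet (sec2 (B k) (x k).2) p1 ∧
      maxSet (sec1 (B k) (x k).1) p2 = {x k}

def StrictNaiveNashRat {K X₁ X₂ : Type} (x : K → X₁ × X₂) (B : K → Set (X₁ × X₂)) : Prop :=
  ∃ p1 p2 : X₁ × X₂ → X₁ × X₂ → Prop, WeakOrder p1 ∧ WeakOrder p2 ∧
    ∀ k, maxSet (sec2 (B k) (x k).2) p1 = {x k} ∧
      maxSet (sec1 (B k) (x k).1) p2 = {x k}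

def SophRat {K X₁ X₂ : Type} (x : K → X₁ × X₂) (B : K → Set (X₁ × X₂)) : Prop :=
  ∃ p1 p2 : X₁ × X₂ → X₁ × X₂ → Prop, WeakOrder p1 ∧ WeakOrder p2 ∧
    ∀ k, maxSet (⋃ a ∈ Prod.fst '' B k, maxSet (sec1 (B k) a) p2) p1 = {x k}

open Fin.NatCast Fin.CommRing in
lemma cycleTrans {α : Type} {p : α → α → Prop} (hrefl : ∀ a, p a a) (htr : Transitive p)
    {L : ℕ} (f : Fin (L + 1) → α) (h : ∀ l, p (f (l + 1)) (f l)) :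
    p (f 0) (f 1) := by
  have key : ∀ n : ℕ, p (f (1 + (n : Fin (L + 1)))) (f 1) := by
    intro n
    induction n with
    | zero => simpa using hrefl (f 1)
    | succ n ih =>
      have e : ((n + 1 : ℕ) : Fin (L + 1)) = (n : Fin (L + 1)) + 1 := by push_cast; ring
      have e2 : (1 : Fin (L + 1)) + ((n : Fin (L + 1)) + 1) = (1 + (n : Fin (L + 1))) + 1 := by
        ring
      rw [e, e2]
      exact htr (h (1 + (n : Fin (L + 1)))) ih
  have hL0 : (1 : Fin (L + 1)) + ((L : ℕ) : Fin (L + 1)) = 0 := by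
    have e : (1 : Fin (L + 1)) + ((L : ℕ) : Fin (L + 1)) = ((L + 1 : ℕ) : Fin (L + 1)) := by
      push_cast; ring
    rw [e, Fin.natCast_self]
  have := key L
  rwa [hL0] at this

lemma transGenChain {α : Type} {R : α → α → Prop} {a b : α} (h : Relation.TransGen R a b) :
    ∃ (L : ℕ) (g : ℕ → α), g 0 = a ∧ g (L + 1) = b ∧ ∀ i ≤ L, R (g i) (g (i + 1)) := by
  induction h with
  | @single c hr =>
    refine ⟨0, fun i => if i = 0 then a else c, rfl, rfl, ?_⟩
    intro i hi
    have hi0 : i = 0 := Nat.le_zero.mp hi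
    subst hi0
    simpa using hr
  | @tail b c hab hbc ih =>
    obtain ⟨L, g, hg0, hgL, hg⟩ := ih
    refine ⟨L + 1, fun i => if i ≤ L + 1 then g i else c, ?_, ?_, ?_⟩
    · show (if 0 ≤ L + 1 then g 0 else c) = a
      rw [if_pos (Nat.zero_le _)]; exact hg0
    · show (if L + 1 + 1 ≤ L + 1 then g (L + 1 + 1) else c) = c
      rw [if_neg (by omega)]
    · intro i hi
      show R (if i ≤ L + 1 then g i else c) (if i + 1 ≤ L + 1 then g (i + 1) else c)
      rcases Nat.lt_or_ge i (L + 1) with h1 | h1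
      · rw [if_pos (by omega), if_pos (by omega)]
        exact hg i (by omega)
      · have hiL : i = L + 1 := le_antisymm hi h1
        subst hiL
        rw [if_pos le_rfl, if_neg (by omega), hgL]
        exact hbc

lemma noCycleTransGen {α : Type} {R : α → α → Prop}
    (h : ¬ ∃ (L : ℕ) (k : Fin (L + 1) → α), ∀ l, R (k l) (k (l + 1))) (a : α) :
    ¬ Relation.TransGen R a a := by
  intro ha
  obtain ⟨L, g, hg0, hgL, hg⟩ := transGenChain ha
  apply h
  refine ⟨L, fun l => g l.val, ?_⟩
  intro l
  show R (g l.val) (g (l + 1).val)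
  rcases eq_or_lt_of_le (Nat.lt_succ_iff.mp l.isLt) with he | hlt
  · have hlast : l = Fin.last L := Fin.ext he
    have h0 : (l + 1 : Fin (L + 1)) = 0 := by rw [hlast, Fin.last_add_one]
    rw [h0]
    show R (g l.val) (g 0)
    rw [hg0, ← hgL, he]
    exact hg L le_rfl
  · rw [Fin.val_add_one_of_lt (by exact hlt)]
    exact hg l.val (Nat.lt_succ_iff.mp l.isLt)

theorem sophisticated_rationalizable_iff_Cond2_of_distinct
    {K X₁ X₂ : Type} [Fintype K]
    (x : K → X₁ × X₂) (B : K → Set (X₁ × X₂)) (hmem : ∀ k, x k ∈ B k)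
    (hdist : ∀ k s : K, k ≠ s → (x k).1 ≠ (x s).1) :
    SophRat x B ↔ Cond2 x B := by
  classical
  have hxinj : Function.Injective x := by
    intro a b hab
    by_contra hne
    exact hdist a b hne (by rw [hab])
  constructor
  · -- SophRat → Cond2
    rintro ⟨p1, p2, ⟨h1tot, h1tr⟩, _, hmax⟩ ⟨L, k, hc⟩
    -- every x m is a p2-maximum of its own section
    have hown : ∀ m, x m ∈ maxSet (sec1 (B m) (x m).1) p2 := by
      intro m
      have hx : x m ∈ maxSet (⋃ a ∈ Prod.fst '' B m, maxSet (sec1 (B m) a) p2) p1 := by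
        rw [hmax m]; rfl
      obtain ⟨a, ha, hy⟩ := Set.mem_iUnion₂.mp hx.1
      have haeq : a = (x m).1 := hy.1.2.symm
      subst haeq
      exact hy
    have hmaxl : ∀ m, x m ∈ maxSet (⋃ a ∈ Prod.fst '' B m, maxSet (sec1 (B m) a) p2) p1 := by
      intro m; rw [hmax m]; rfl
    have hmemU : ∀ l, x (k l) ∈
        ⋃ a ∈ Prod.fst '' B (k (l + 1)), maxSet (sec1 (B (k (l + 1))) a) p2 := by
      intro l
      obtain ⟨hne, hin, hsub⟩ := hc l
      apply Set.mem_biUnion (show (x (k l)).1 ∈ Prod.fst '' B (k (l + 1)) from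
        ⟨x (k l), hin.1, rfl⟩)
      exact ⟨hin, fun y hy => (hown (k l)).2 y (hsub hy)⟩
    have hup : ∀ l, p1 (x (k (l + 1))) (x (k l)) := fun l => (hmaxl (k (l + 1))).2 _ (hmemU l)
    have hdown : ¬ p1 (x (k 0)) (x (k 1)) := by
      intro hp
      have hxmax : x (k 0) ∈ maxSet
          (⋃ a ∈ Prod.fst '' B (k 1), maxSet (sec1 (B (k 1)) a) p2) p1 := by
        refine ⟨by simpa using hmemU 0, fun z hz => h1tr hp ((hmaxl (k 1)).2 z hz)⟩
      rw [hmax (k 1)] at hxmax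
      exact (hc 0).1 (by simpa using hxmax)
    have hrefl : ∀ a, p1 a a := fun a => (h1tot a a).elim id id
    exact hdown (cycleTrans hrefl h1tr (fun l => x (k l)) hup)
  · -- Cond2 → SophRat
    intro h2
    set Rel : K → K → Prop := fun s t => x s ≠ x t ∧ x s ∈ sec1 (B t) (x s).1 ∧
      sec1 (B t) (x s).1 ⊆ sec1 (B s) (x s).1 with hRel
    have hacyc : ∀ a, ¬ Relation.TransGen Rel a a := by
      apply noCycleTransGen
      rintro ⟨L, k, hk⟩
      exact h2 ⟨L, k, fun l => hk l⟩
    set r : K → ℕ := fun t => (Finset.univ.filter (fun s => Relation.TransGen Rel s t)).card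
      with hrdef
    have hr : ∀ s t, Rel s t → r s < r t := by
      intro s t hst
      apply Finset.card_lt_card
      rw [Finset.ssubset_def]
      constructor
      · intro u hu
        simp only [Finset.mem_filter, Finset.mem_univ, true_and] at *
        exact hu.tail hst
      · intro hsub
        have hs : s ∈ Finset.univ.filter (fun u => Relation.TransGen Rel u t) := by
          simp [Relation.TransGen.single hst]
        have := hsub hs
        simp only [Finset.mem_filter, Finset.mem_univ, true_and] at this
        exact hacyc s this
    set u2 : X₁ × X₂ → ℕ := fun y =>
      if ∃ t, y = x t then 1 else if ∃ s, y ∈ sec1 (B s) (x s).1 then 0 else 2 with hu2def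
    set u1 : X₁ × X₂ → ℕ := fun y => if h : ∃ t, x t = y then r h.choose + 1 else 0 with hu1def
    have hu1x : ∀ m, u1 (x m) = r m + 1 := by
      intro m
      have h : ∃ t, x t = x m := ⟨m, rfl⟩
      rw [hu1def]
      simp only [dif_pos h]
      rw [hxinj h.choose_spec]
    have hu1y : ∀ y : X₁ × X₂, (∀ t, y ≠ x t) → u1 y = 0 := by
      intro y hy
      rw [hu1def]
      exact dif_neg (fun ⟨t, ht⟩ => hy t ht.symm)
    have hu2x : ∀ m, u2 (x m) = 1 := by
      intro m; rw [hu2def]; exact if_pos ⟨m, rfl⟩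
    -- any point in m's own section has u2 ≤ 1
    have hu2sec : ∀ m, ∀ y ∈ sec1 (B m) (x m).1, u2 y ≤ 1 := by
      intro m y hy
      simp only [hu2def]
      by_cases h : ∃ t, y = x t
      · rw [if_pos h]
      · rw [if_neg h, if_pos ⟨m, hy⟩]
        omega
    have hown2 : ∀ m, x m ∈ maxSet (sec1 (B m) (x m).1) (fun y z => u2 z ≤ u2 y) := by
      intro m
      refine ⟨⟨hmem m, rfl⟩, fun y hy => ?_⟩
      show u2 y ≤ u2 (x m)
      rw [hu2x m]
      exact hu2sec m y hy
    refine ⟨fun y z => u1 z ≤ u1 y, fun y z => u2 z ≤ u2 y,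
      ⟨fun a b => le_total (u1 b) (u1 a), fun a b c hab hbc => le_trans hbc hab⟩,
      ⟨fun a b => le_total (u2 b) (u2 a), fun a b c hab hbc => le_trans hbc hab⟩, ?_⟩
    intro k
    have hxkU : x k ∈ ⋃ a ∈ Prod.fst '' B k, maxSet (sec1 (B k) a) (fun y z => u2 z ≤ u2 y) :=
      Set.mem_biUnion ⟨x k, hmem k, rfl⟩ (hown2 k)
    have key : ∀ y, y ∈ (⋃ a ∈ Prod.fst '' B k, maxSet (sec1 (B k) a) (fun y z => u2 z ≤ u2 y)) →
        y ≠ x k → u1 y < u1 (x k) := by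
      intro y hy hne
      rw [hu1x k]
      obtain ⟨a, ha, hym⟩ := Set.mem_iUnion₂.mp hy
      by_cases hyx : ∃ t, y = x t
      · obtain ⟨s, rfl⟩ := hyx
        have hsk : s ≠ k := fun h => hne (by rw [h])
        have ha' : a = (x s).1 := hym.1.2.symm
        subst ha'
        have hsub : sec1 (B k) (x s).1 ⊆ sec1 (B s) (x s).1 := by
          intro z hz
          by_contra hzB
          have hz2 : u2 z = 2 := by
            simp only [hu2def]
            rw [if_neg, if_neg]
            · rintro ⟨t, hzt⟩
              have hts : t = s := by
                by_contra hts
                exact hdist t s hts (by rw [← hzt.2]; exact hz.2)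
              subst hts
              exact hzB hzt
            · rintro ⟨t, hzt⟩
              have hts : t = s := by
                by_contra hts
                exact hdist t s hts (by rw [← hzt]; exact hz.2)
              subst hts
              exact hzB (by rw [hzt]; exact ⟨hmem _, rfl⟩)
          have hle : u2 z ≤ u2 (x s) := hym.2 z hz
          rw [hz2, hu2x s] at hle
          omega
        have hRsk : Rel s k := ⟨fun h => hsk (hxinj h), hym.1, hsub⟩
        rw [hu1x s]
        exact Nat.succ_lt_succ (hr s k hRsk)
      · rw [hu1y y (fun t ht => hyx ⟨t, ht⟩)]
        omega
    ext y
    simp only [Set.mem_singleton_iff]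
    constructor
    · rintro ⟨hyU, hymax⟩
      by_contra hne
      have hlt : u1 y < u1 (x k) := key y hyU hne
      have hge : u1 (x k) ≤ u1 y := hymax (x k) hxkU
      omega
    · rintro rfl
      refine ⟨hxkU, fun z hz => ?_⟩
      by_cases hz' : z = x k
      · subst hz'; exact le_refl _
      · exact le_of_lt (key z hz hz')
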